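/- In the single-agent BEBA model with p < 0 and β ≥ -1/p: if y(0) < -1/(β*p) then y(t) → p; if y(0) > -1/(β*p) then y(t) → 1; if y(0) = -1/(β*p) then y(t) = -1/(β*p) for all t. -/

import Mathlib

/-- Single-agent BEBA with `p < 0` and `β ≥ -1/p` (update clipped to `[-1,1]`):
if `y 0 < -1/(β*p)` then `y t → p`; if `y 0 > -1/(β*p)` then `y t → 1`;
if `y 0 = -1/(β*p)` then `y t = -1/(β*p)` for all `t`. -/
theorem stmt_11 (w β p : ℝ) (hw : 0 < w) (hβ : 0 < β)
    (hp : -1 ≤ p) (hp0 : p < 0) (hβp : β ≥ -1 / p)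
    (y : ℕ → ℝ) (h0 : y 0 ∈ Set.Icc (-1 : ℝ) 1)
    (hupd : ∀ t, y (t + 1) =
      max (-1) (min 1
        (if w + β * p * y t + 1 ≤ 0 then Real.sign (y t)
         else (w * y t + β * p ^ 2 * y t + p) / (w + β * p * y t + 1)))) :
    (y 0 < -1 / (β * p) → Filter.Tendsto y Filter.atTop (nhds p)) ∧
    (y 0 > -1 / (β * p) → Filter.Tendsto y Filter.atTop (nhds 1)) ∧
    (y 0 = -1 / (β * p) → ∀ t, y t = -1 / (β * p)) := by
  have hp' : p ≠ 0 := ne_of_lt hp0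
  have hbp : β * p < 0 := mul_neg_of_pos_of_neg hβ hp0
  have hbp' : β * p ≠ 0 := ne_of_lt hbp
  have hbp2 : 0 ≤ β * p ^ 2 := by nlinarith [mul_nonneg hβ.le (sq_nonneg p)]
  have hbp1 : β * p ≤ -1 := by
    have h1 : β * p ≤ -1 / p * p := mul_le_mul_of_nonpos_right hβp hp0.le
    rwa [div_mul_cancel₀ _ hp'] at h1
  set c : ℝ := -1 / (β * p) with hc
  have hbc : β * p * c = -1 := by
    rw [hc]; field_simp
  have hc0 : 0 < c := by
    rw [hc, div_pos_iff]; right; constructor <;> linarith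
  have hc1 : c ≤ 1 := by
    rw [hc, div_le_iff_of_neg hbp]; linarith
  have hpc : p < c := lt_trans hp0 hc0
  -- denominator facts in region x < c
  have hDlt : ∀ x : ℝ, x < c → 0 < β * p * x + 1 := by
    intro x hx
    have h1 : β * p * c < β * p * x := mul_lt_mul_of_neg_left hx hbp
    rw [hbc] at h1; linarith
  -- exact update in the region [-1, c)
  have hstep : ∀ t, -1 ≤ y t → y t < c →
      y (t + 1) = (w * y t + β * p ^ 2 * y t + p) / (w + β * p * y t + 1) := by
    intro t h1 h2
    have hbx : 0 < β * p * y t + 1 := hDlt _ h2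
    have hD : 0 < w + β * p * y t + 1 := by linarith
    have hflt : (w * y t + β * p ^ 2 * y t + p) / (w + β * p * y t + 1) < c := by
      rw [div_lt_iff₀ hD]
      have e1 : c * (w + β * p * y t + 1) - (w * y t + β * p ^ 2 * y t + p)
          = (c - y t) * (w + β * p ^ 2 + 1) + (y t - p) * (β * p * c + 1) := by ring
      rw [hbc] at e1
      have h3 : 0 < (c - y t) * (w + β * p ^ 2 + 1) :=
        mul_pos (by linarith) (by linarith)
      linarith
    have hfge : -1 ≤ (w * y t + β * p ^ 2 * y t + p) / (w + β * p * y t + 1) := by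
      rw [le_div_iff₀ hD]
      have e2 : (w * y t + β * p ^ 2 * y t + p) + (w + β * p * y t + 1)
          = w * (y t + 1) + (p + 1) * (β * p * y t + 1) := by ring
      have h4 : 0 ≤ w * (y t + 1) := mul_nonneg hw.le (by linarith)
      have h5 : 0 ≤ (p + 1) * (β * p * y t + 1) := mul_nonneg (by linarith) hbx.le
      linarith
    rw [hupd t, if_neg (by linarith)]
    rw [min_eq_right (by linarith), max_eq_right hfge]
  -- fixed point identification
  have hfix : ∀ L : ℝ, w * L + β * p ^ 2 * L + p = L * (w + β * p * L + 1) →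
      L < c → L = p := by
    intro L hEq hLc
    have h1 : (L - p) * (β * p * L + 1) = 0 := by linear_combination -hEq
    have h2 : 0 < β * p * L + 1 := hDlt _ hLc
    rcases mul_eq_zero.mp h1 with h | h
    · linarith
    · linarith
  -- limit equation from convergence, given exact update and limit
  have hlimEq : ∀ L : ℝ, Filter.Tendsto y Filter.atTop (nhds L) →
      (∀ t, -1 ≤ y t ∧ y t < c) →
      w * L + β * p ^ 2 * L + p = L * (w + β * p * L + 1) := by
    intro L hL hinv
    have t1 : Filter.Tendsto (fun t => w * y t + β * p ^ 2 * y t + p)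
        Filter.atTop (nhds (w * L + β * p ^ 2 * L + p)) :=
      ((hL.const_mul w).add (hL.const_mul (β * p ^ 2))).add tendsto_const_nhds
    have t2 : Filter.Tendsto (fun t => y (t + 1) * (w + β * p * y t + 1))
        Filter.atTop (nhds (L * (w + β * p * L + 1))) := by
      apply Filter.Tendsto.mul
      · exact hL.comp (Filter.tendsto_add_atTop_nat 1)
      · exact (tendsto_const_nhds.add (hL.const_mul (β * p))).add tendsto_const_nhds
    have heq : (fun t => w * y t + β * p ^ 2 * y t + p)
        = fun t => y (t + 1) * (w + β * p * y t + 1) := by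
      funext t
      have hD : 0 < w + β * p * y t + 1 := by linarith [hDlt _ (hinv t).2]
      rw [hstep t (hinv t).1 (hinv t).2, div_mul_cancel₀ _ (ne_of_gt hD)]
    rw [heq] at t1
    exact tendsto_nhds_unique t1 t2
  refine ⟨?_, ?_, ?_⟩
  · -- y 0 < c : tendsto p
    intro hy0
    rcases le_total (y 0) p with hA | hB
    · -- increasing case, y ≤ p
      have inv : ∀ t, -1 ≤ y t ∧ y t ≤ p := by
        intro t
        induction t with
        | zero => exact ⟨h0.1, hA⟩
        | succ n ih =>
          have hlt : y n < c := lt_of_le_of_lt ih.2 hpc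
          have hbx : 0 < β * p * y n + 1 := hDlt _ hlt
          have hD : 0 < w + β * p * y n + 1 := by linarith
          rw [hstep n ih.1 hlt]
          constructor
          · rw [le_div_iff₀ hD]
            have e2 : (w * y n + β * p ^ 2 * y n + p) + (w + β * p * y n + 1)
                = w * (y n + 1) + (p + 1) * (β * p * y n + 1) := by ring
            have h4 : 0 ≤ w * (y n + 1) := mul_nonneg hw.le (by linarith [ih.1])
            have h5 : 0 ≤ (p + 1) * (β * p * y n + 1) := mul_nonneg (by linarith) hbx.le
            linarith
          · rw [div_le_iff₀ hD]
            have e3 : p * (w + β * p * y n + 1) - (w * y n + β * p ^ 2 * y n + p)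
                = w * (p - y n) := by ring
            have h6 : 0 ≤ w * (p - y n) := mul_nonneg hw.le (by linarith [ih.2])
            linarith
      have hinv' : ∀ t, -1 ≤ y t ∧ y t < c := fun t => ⟨(inv t).1, lt_of_le_of_lt (inv t).2 hpc⟩
      have hmono : Monotone y := by
        apply monotone_nat_of_le_succ
        intro t
        have hlt : y t < c := (hinv' t).2
        have hbx : 0 < β * p * y t + 1 := hDlt _ hlt
        have hD : 0 < w + β * p * y t + 1 := by linarith
        rw [hstep t (inv t).1 hlt, le_div_iff₀ hD]
        have e4 : (w * y t + β * p ^ 2 * y t + p) - y t * (w + β * p * y t + 1)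
            = -((y t - p) * (β * p * y t + 1)) := by ring
        have h7 : (y t - p) * (β * p * y t + 1) ≤ 0 :=
          mul_nonpos_of_nonpos_of_nonneg (by linarith [(inv t).2]) hbx.le
        linarith
      have hbdd : BddAbove (Set.range y) := ⟨p, by rintro x ⟨t, rfl⟩; exact (inv t).2⟩
      have hL : Filter.Tendsto y Filter.atTop (nhds (⨆ t, y t)) :=
        tendsto_atTop_ciSup hmono hbdd
      have hLp : (⨆ t, y t) ≤ p := ciSup_le fun t => (inv t).2
      have hEq := hlimEq _ hL hinv'
      have : (⨆ t, y t) = p := hfix _ hEq (lt_of_le_of_lt hLp hpc)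
      rwa [this] at hL
    · -- decreasing case, p ≤ y ≤ y 0 < c
      have inv : ∀ t, p ≤ y t ∧ y t < c := by
        intro t
        induction t with
        | zero => exact ⟨hB, hy0⟩
        | succ n ih =>
          have hge1 : -1 ≤ y n := le_trans hp ih.1
          have hbx : 0 < β * p * y n + 1 := hDlt _ ih.2
          have hD : 0 < w + β * p * y n + 1 := by linarith
          rw [hstep n hge1 ih.2]
          constructor
          · rw [le_div_iff₀ hD]
            have e3 : (w * y n + β * p ^ 2 * y n + p) - p * (w + β * p * y n + 1)
                = w * (y n - p) := by ring
            have h6 : 0 ≤ w * (y n - p) := mul_nonneg hw.le (by linarith [ih.1])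
            linarith
          · rw [div_lt_iff₀ hD]
            have e1 : c * (w + β * p * y n + 1) - (w * y n + β * p ^ 2 * y n + p)
                = (c - y n) * (w + β * p ^ 2 + 1) + (y n - p) * (β * p * c + 1) := by ring
            rw [hbc] at e1
            have h3 : 0 < (c - y n) * (w + β * p ^ 2 + 1) :=
              mul_pos (by linarith [ih.2]) (by linarith)
            linarith
      have hinv' : ∀ t, -1 ≤ y t ∧ y t < c := fun t => ⟨le_trans hp (inv t).1, (inv t).2⟩
      have hanti : Antitone y := by
        apply antitone_nat_of_succ_le
        intro t
        have hbx : 0 < β * p * y t + 1 := hDlt _ (inv t).2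
        have hD : 0 < w + β * p * y t + 1 := by linarith
        rw [hstep t (hinv' t).1 (inv t).2, div_le_iff₀ hD]
        have e4 : y t * (w + β * p * y t + 1) - (w * y t + β * p ^ 2 * y t + p)
            = (y t - p) * (β * p * y t + 1) := by ring
        have h7 : 0 ≤ (y t - p) * (β * p * y t + 1) :=
          mul_nonneg (by linarith [(inv t).1]) hbx.le
        linarith
      have hbdd : BddBelow (Set.range y) := ⟨p, by rintro x ⟨t, rfl⟩; exact (inv t).1⟩
      have hL : Filter.Tendsto y Filter.atTop (nhds (⨅ t, y t)) :=
        tendsto_atTop_ciInf hanti hbdd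
      have hLle : (⨅ t, y t) ≤ y 0 := ciInf_le hbdd 0
      have hEq := hlimEq _ hL hinv'
      have : (⨅ t, y t) = p := hfix _ hEq (lt_of_le_of_lt hLle hy0)
      rwa [this] at hL
  · -- y 0 > c : tendsto 1
    intro hy0
    have step2 : ∀ t, c < y t → y t ≤ 1 →
        (c < y (t + 1) ∧ y (t + 1) ≤ 1) ∧ y t ≤ y (t + 1) := by
      intro t h1 h2
      have hclt1 : c < 1 := lt_of_lt_of_le h1 h2
      by_cases hD0 : w + β * p * y t + 1 ≤ 0
      · have hy1 : y (t + 1) = 1 := by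
          rw [hupd t, if_pos hD0, Real.sign_of_pos (lt_trans hc0 h1)]
          norm_num
        rw [hy1]
        exact ⟨⟨hclt1, le_refl 1⟩, h2⟩
      · push_neg at hD0
        set v : ℝ := (w * y t + β * p ^ 2 * y t + p) / (w + β * p * y t + 1) with hv
        have hbxneg : β * p * y t + 1 < 0 := by
          have h3 : β * p * y t < β * p * c := mul_lt_mul_of_neg_left h1 hbp
          rw [hbc] at h3; linarith
        have hvgtc : c < v := by
          rw [hv, lt_div_iff₀ hD0]
          have e1 : (w * y t + β * p ^ 2 * y t + p) - c * (w + β * p * y t + 1)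
              = (y t - c) * (w + β * p ^ 2 + 1) + (p - y t) * (β * p * c + 1) := by ring
          rw [hbc] at e1
          have h3 : 0 < (y t - c) * (w + β * p ^ 2 + 1) :=
            mul_pos (by linarith) (by linarith)
          linarith
        have hvgex : y t ≤ v := by
          rw [hv, le_div_iff₀ hD0]
          have e4 : (w * y t + β * p ^ 2 * y t + p) - y t * (w + β * p * y t + 1)
              = -((y t - p) * (β * p * y t + 1)) := by ring
          have h7 : (y t - p) * (β * p * y t + 1) ≤ 0 :=
            mul_nonpos_of_nonneg_of_nonpos (by linarith) hbxneg.le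
          linarith
        have hy1 : y (t + 1) = min 1 v := by
          rw [hupd t, if_neg (by linarith), ← hv]
          refine max_eq_right ?_
          rcases le_total v 1 with h | h
          · rw [min_eq_right h]; linarith
          · rw [min_eq_left h]; norm_num
        rw [hy1]
        refine ⟨⟨lt_min hclt1 hvgtc, min_le_left _ _⟩, le_min h2 hvgex⟩
    have inv : ∀ t, c < y t ∧ y t ≤ 1 := by
      intro t
      induction t with
      | zero => exact ⟨hy0, h0.2⟩
      | succ n ih => exact (step2 n ih.1 ih.2).1
    have hmono : Monotone y :=
      monotone_nat_of_le_succ fun t => (step2 t (inv t).1 (inv t).2).2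
    have hbdd : BddAbove (Set.range y) := ⟨1, by rintro x ⟨t, rfl⟩; exact (inv t).2⟩
    set L : ℝ := ⨆ t, y t with hLdef
    have hL : Filter.Tendsto y Filter.atTop (nhds L) := tendsto_atTop_ciSup hmono hbdd
    have hL1 : L ≤ 1 := ciSup_le fun t => (inv t).2
    have hyL : ∀ t, y t ≤ L := fun t => le_ciSup hbdd t
    have hcL : c < L := lt_of_lt_of_le (inv 0).1 (hyL 0)
    have hLeq1 : L = 1 := by
      by_contra hne
      have hLlt1 : L < 1 := lt_of_le_of_ne hL1 hne
      have hkey : ∀ t, 0 ≤ L * (w + β * p * y t + 1) - (w * y t + β * p ^ 2 * y t + p) := by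
        intro t
        have hD : 0 < w + β * p * y t + 1 := by
          by_contra hD
          push_neg at hD
          have h1 : y (t + 1) = 1 := by
            rw [hupd t, if_pos hD, Real.sign_of_pos (lt_trans hc0 (inv t).1)]
            norm_num
          linarith [hyL (t + 1)]
        set v : ℝ := (w * y t + β * p ^ 2 * y t + p) / (w + β * p * y t + 1) with hv
        have hy1 : y (t + 1) = max (-1) (min 1 v) := by
          rw [hupd t, if_neg (by linarith)]
        have hvle1 : v ≤ 1 := by
          by_contra h
          push_neg at h
          rw [min_eq_left h.le, max_eq_right (by norm_num : (-1:ℝ) ≤ 1)] at hy1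
          linarith [hyL (t + 1)]
        have hvley : v ≤ y (t + 1) := by
          rw [hy1, min_eq_right hvle1]
          exact le_max_right _ _
        have hvleL : v ≤ L := le_trans hvley (hyL (t + 1))
        rw [hv, div_le_iff₀ hD] at hvleL
        linarith
      have tg : Filter.Tendsto
          (fun t => L * (w + β * p * y t + 1) - (w * y t + β * p ^ 2 * y t + p))
          Filter.atTop
          (nhds (L * (w + β * p * L + 1) - (w * L + β * p ^ 2 * L + p))) := by
        apply Filter.Tendsto.sub
        · exact (((tendsto_const_nhds.add (hL.const_mul (β * p))).add
            tendsto_const_nhds).const_mul L)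
        · exact ((hL.const_mul w).add (hL.const_mul (β * p ^ 2))).add tendsto_const_nhds
      have hge : 0 ≤ L * (w + β * p * L + 1) - (w * L + β * p ^ 2 * L + p) :=
        ge_of_tendsto' tg hkey
      have hbl : β * p * L + 1 < 0 := by
        have h3 : β * p * L < β * p * c := mul_lt_mul_of_neg_left hcL hbp
        rw [hbc] at h3; linarith
      have hneg : (L - p) * (β * p * L + 1) < 0 :=
        mul_neg_of_pos_of_neg (by linarith) hbl
      have hid : L * (w + β * p * L + 1) - (w * L + β * p ^ 2 * L + p)
          = (L - p) * (β * p * L + 1) := by ring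
      linarith
    rwa [hLeq1] at hL
  · -- y 0 = c : constant
    intro h0c t
    induction t with
    | zero => exact h0c
    | succ n ih =>
      rw [hupd n, ih]
      have hDc : w + β * p * c + 1 = w := by rw [hc]; field_simp; ring
      rw [if_neg (by rw [hDc]; linarith)]
      have e2 : (w * c + β * p ^ 2 * c + p) / (w + β * p * c + 1) = c := by
        rw [hDc]
        have : w * c + β * p ^ 2 * c + p = w * c + p * (β * p * c) + p := by ring
        rw [this, hbc]
        field_simp
        ring
      rw [e2, min_eq_right hc1, max_eq_right (by linarith)]
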